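/- Let d > 0, f : ℝ → ℝ continuous with f(0) = 0 and f'(0) > 0 (f differentiable at 0). Let R > 0 satisfy π/(2R) ≤ √(f'(0)/(2d)), and define Ψ(x) = cos(πx/(2R)) for |x| ≤ R. Then there exists ε̃ > 0 such that for all ε ∈ (0, ε̃] and all x ∈ (-R, R), -d·(εΨ)''(x) < f(ε·Ψ(x)). -/

import Mathlib

open Real Filter Set MeasureTheory Topology

/-- Construction of a small stationary subsolution bump: for `Ψ(x) = cos(πx/(2R))`
and small `ε > 0`, `-d(εΨ)'' < f(εΨ)` on `(-R, R)`. -/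
theorem small_bump_subsolution
    (d : ℝ) (hd : 0 < d)
    (f : ℝ → ℝ) (hfc : Continuous f) (hf0 : f 0 = 0)
    (f0' : ℝ) (hf' : HasDerivAt f f0' 0) (hf'pos : 0 < f0')
    (R : ℝ) (hR : 0 < R) (hRbig : π / (2 * R) ≤ Real.sqrt (f0' / (2 * d))) :
    ∃ εt > (0:ℝ), ∀ ε : ℝ, 0 < ε → ε ≤ εt → ∀ x ∈ Set.Ioo (-R) R,
      -d * deriv (deriv (fun y => ε * Real.cos (π * y / (2 * R)))) x
        < f (ε * Real.cos (π * x / (2 * R))) := by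
  set c : ℝ := π / (2 * R) with hc
  have hcpos : 0 < c := div_pos Real.pi_pos (by linarith)
  -- bound on d * c ^ 2
  have hX : (0:ℝ) ≤ f0' / (2 * d) := le_of_lt (div_pos hf'pos (by linarith))
  have hc2 : c ^ 2 ≤ f0' / (2 * d) := by
    have := sq_le_sq' (by nlinarith [Real.sqrt_nonneg (f0' / (2*d))]) hRbig
    calc c ^ 2 ≤ Real.sqrt (f0' / (2*d)) ^ 2 := this
      _ = f0' / (2 * d) := Real.sq_sqrt hX
  have hdc2 : d * c ^ 2 ≤ f0' / 2 := by
    have := mul_le_mul_of_nonneg_left hc2 hd.le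
    calc d * c ^ 2 ≤ d * (f0' / (2 * d)) := this
      _ = f0' / 2 := by field_simp
  -- slope bound near 0
  have hslope : Tendsto (slope f 0) (𝓝[≠] 0) (𝓝 f0') := hasDerivAt_iff_tendsto_slope.mp hf'
  have hev : ∀ᶠ s in 𝓝[>] (0:ℝ), f0' / 2 < slope f 0 s := by
    have h1 : ∀ᶠ s in 𝓝[≠] (0:ℝ), f0' / 2 < slope f 0 s :=
      hslope (Ioi_mem_nhds (by linarith))
    exact h1.filter_mono (nhdsWithin_mono _ (fun s hs => ne_of_gt hs))
  obtain ⟨εt, hεt, hsub⟩ := mem_nhdsGT_iff_exists_Ioc_subset.mp hev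
  refine ⟨εt, hεt, ?_⟩
  intro ε hε hεle x hx
  -- derivatives
  have hlin : ∀ y : ℝ, HasDerivAt (fun y : ℝ => π * y / (2 * R)) c y := by
    intro y
    have := ((hasDerivAt_id y).const_mul π).div_const (2 * R)
    simpa [hc, mul_one] using this
  have hD1 : ∀ y : ℝ, HasDerivAt (fun y : ℝ => ε * Real.cos (π * y / (2 * R)))
      (ε * (-Real.sin (π * y / (2 * R)) * c)) y := fun y => ((hlin y).cos).const_mul ε
  have hD1' : deriv (fun y : ℝ => ε * Real.cos (π * y / (2 * R)))
      = fun y : ℝ => ε * (-Real.sin (π * y / (2 * R)) * c) := by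
    funext y; exact (hD1 y).deriv
  have hD2 : HasDerivAt (fun y : ℝ => ε * (-Real.sin (π * y / (2 * R)) * c))
      (ε * (-(Real.cos (π * x / (2 * R)) * c) * c)) x := by
    have := (((hlin x).sin).neg.mul_const c).const_mul ε
    simpa using this
  rw [hD1']
  rw [hD2.deriv]
  -- positivity of cos
  have hxlt : π * x / (2 * R) = c * x := by rw [hc]; ring
  have hcospos : 0 < Real.cos (π * x / (2 * R)) := by
    rw [hxlt]
    apply Real.cos_pos_of_mem_Ioo
    constructor
    · have : -(π/2) = c * (-R) := by rw [hc]; field_simp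
      rw [this]
      exact (mul_lt_mul_iff_right₀ hcpos).2 hx.1
    · have : π/2 = c * R := by rw [hc]; field_simp
      rw [this]
      exact (mul_lt_mul_iff_right₀ hcpos).2 hx.2
  set s : ℝ := ε * Real.cos (π * x / (2 * R)) with hs
  have hspos : 0 < s := mul_pos hε hcospos
  have hsle : s ≤ εt := by
    have : Real.cos (π * x / (2 * R)) ≤ 1 := Real.cos_le_one _
    nlinarith
  have hfs : f0' / 2 * s < f s := by
    have h := hsub ⟨hspos, hsle⟩
    have hsl : slope f 0 s = f s / s := by simp [slope, hf0]; ring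
    rw [mem_setOf_eq, hsl] at h
    exact (lt_div_iff₀ hspos).mp h
  have key : -d * (ε * (-(Real.cos (π * x / (2 * R)) * c) * c)) = d * c ^ 2 * s := by
    rw [hs]; ring
  rw [key]
  nlinarith [mul_le_mul_of_nonneg_right hdc2 hspos.le]
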